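/- Relative Brezis–Browder principle: Let (Z,≤) be a quasi-ordered set, M a nonempty subset of Z, and φ : Z → ℝ ∪ {−∞,∞} a function (restricted to M). Assume (i) φ is ≤-decreasing on M (x,y ∈ M and x ≤ y imply φ(x) ≥ φ(y)); (ii) φ is inf-proper over M: inf φ(M) > −∞ and Dom(φ) := {x ∈ M : φ(x) < ∞} is nonempty; (iii) Dom(φ) is sequentially inductive in M: every ≤-ascending sequence contained in Dom(φ) is bounded above in M modulo ≤. Then for each u ∈ Dom(φ) there exists v ∈ Dom(φ) such that u ≤ v and, for every x ∈ M with v ≤ x, one has φ(v) = φ(x). -/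

import Mathlib

/-- Relative Brezis–Browder principle. -/
theorem relative_brezis_browder_principle {Z : Type*}
    (le : Z → Z → Prop)
    (hrefl : ∀ x, le x x)
    (htrans : ∀ x y z, le x y → le y z → le x z)
    (M : Set Z) (hM : M.Nonempty)
    (φ : Z → EReal)
    (hdec : ∀ x ∈ M, ∀ y ∈ M, le x y → φ y ≤ φ x)
    (hinf : ⊥ < sInf (φ '' M))
    (hdom : {x ∈ M | φ x < ⊤}.Nonempty)
    (hind : ∀ x : ℕ → Z, (∀ n : ℕ, x n ∈ {x ∈ M | φ x < ⊤}) →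
      (∀ n m : ℕ, n ≤ m → le (x n) (x m)) →
      ∃ b ∈ M, ∀ n : ℕ, le (x n) b) :
    ∀ u ∈ {x ∈ M | φ x < ⊤}, ∃ v ∈ {x ∈ M | φ x < ⊤},
      le u v ∧ ∀ x ∈ M, le v x → φ v = φ x := by
  classical
  intro u hu
  set D := {x ∈ M | φ x < ⊤} with hD
  have hbot : ∀ x ∈ M, ⊥ < φ x := fun x hx =>
    lt_of_lt_of_le hinf (sInf_le ⟨x, hx, rfl⟩)
  -- key step: from any x ∈ D and ε > 0, find y "almost minimizing" above x
  have key : ∀ x ∈ D, ∀ ε : ℝ, 0 < ε → ∃ y, y ∈ D ∧ le x y ∧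
      ∀ z ∈ M, le x z → φ y ≤ φ z + (ε : EReal) := by
    intro x hx ε hε
    set S := {z ∈ M | le x z} with hS
    set β := sInf (φ '' S) with hβ
    have hxS : x ∈ S := ⟨hx.1, hrefl x⟩
    have hβ_le : β ≤ φ x := sInf_le ⟨x, hxS, rfl⟩
    have hβ_bot : ⊥ < β := by
      refine lt_of_lt_of_le hinf (sInf_le_sInf ?_)
      rintro _ ⟨z, hz, rfl⟩; exact ⟨z, hz.1, rfl⟩
    have hβ_top : β < ⊤ := lt_of_le_of_lt hβ_le hx.2
    obtain ⟨r, hr⟩ : ∃ r : ℝ, β = (r : EReal) := by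
      lift β to ℝ using ⟨hβ_top.ne, hβ_bot.ne'⟩ with r
      exact ⟨r, rfl⟩
    have hlt : β < β + (ε : EReal) := by
      rw [hr, ← EReal.coe_add, EReal.coe_lt_coe_iff]
      linarith
    obtain ⟨_, ⟨y, hyS, rfl⟩, hy⟩ := sInf_lt_iff.mp (show sInf (φ '' S) < β + ε from hlt)
    have hsum_top : β + (ε : EReal) < ⊤ := by
      rw [hr, ← EReal.coe_add]; exact EReal.coe_lt_top _
    refine ⟨y, ⟨hyS.1, lt_trans hy hsum_top⟩, hyS.2, ?_⟩
    intro z hz hxz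
    have hβz : β ≤ φ z := sInf_le ⟨z, ⟨hz, hxz⟩, rfl⟩
    exact le_trans hy.le (add_le_add_left hβz _)
  -- build the sequence
  have key' : ∀ p : {x // x ∈ D} × ℕ, ∃ y : {x // x ∈ D}, le p.1.1 y.1 ∧
      ∀ z ∈ M, le p.1.1 z → φ y.1 ≤ φ z + (((1/2 : ℝ)^p.2 : ℝ) : EReal) := by
    rintro ⟨⟨x, hx⟩, n⟩
    obtain ⟨y, hyD, hxy, hspec⟩ := key x hx ((1/2)^n) (by positivity)
    exact ⟨⟨y, hyD⟩, hxy, hspec⟩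
  let f : {x // x ∈ D} × ℕ → {x // x ∈ D} := fun p => Classical.choose (key' p)
  have hf : ∀ p, le p.1.1 (f p).1 ∧
      ∀ z ∈ M, le p.1.1 z → φ (f p).1 ≤ φ z + (((1/2 : ℝ)^p.2 : ℝ) : EReal) :=
    fun p => Classical.choose_spec (key' p)
  let c : ℕ → {x // x ∈ D} := fun n => Nat.rec ⟨u, hu⟩ (fun n xn => f (xn, n)) n
  have hc0 : c 0 = ⟨u, hu⟩ := rfl
  have hcsucc : ∀ n, c (n+1) = f (c n, n) := fun n => rfl
  have hstep : ∀ n, le (c n).1 (c (n+1)).1 := fun n => (hf (c n, n)).1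
  have hmono : ∀ n m, n ≤ m → le (c n).1 (c m).1 := by
    intro n m hnm
    induction m with
    | zero => cases Nat.le_zero.mp hnm; exact hrefl _
    | succ m ih =>
      rcases Nat.lt_or_ge n (m+1) with h | h
      · exact htrans _ _ _ (ih (Nat.lt_succ_iff.mp h)) (hstep m)
      · have : n = m + 1 := le_antisymm hnm h
        subst this; exact hrefl _
  obtain ⟨b, hbM, hb⟩ := hind (fun n => (c n).1) (fun n => (c n).2) hmono
  have hφb_le : ∀ n, φ b ≤ φ (c n).1 := fun n =>
    hdec _ (c n).2.1 b hbM (hb n)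
  have hbD : b ∈ D := ⟨hbM, lt_of_le_of_lt (hφb_le 0) (by rw [hc0]; exact hu.2)⟩
  refine ⟨b, hbD, by rw [← hc0] at *; exact hb 0, ?_⟩
  intro x hx hbx
  have hxb : φ x ≤ φ b := hdec b hbM x hx hbx
  have hkey : ∀ n : ℕ, φ b ≤ φ x + (((1/2 : ℝ)^n : ℝ) : EReal) := by
    intro n
    have hcx : le (c n).1 x := htrans _ _ _ (hb n) hbx
    have := (hf (c n, n)).2 x hx hcx
    exact le_trans (hφb_le (n+1)) this
  -- conclude φ b ≤ φ x via finiteness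
  have hxtop : φ x < ⊤ := lt_of_le_of_lt hxb hbD.2
  have hxbot : ⊥ < φ x := hbot x hx
  have hbtop : φ b < ⊤ := hbD.2
  have hbbot : ⊥ < φ b := hbot b hbM
  obtain ⟨a, ha⟩ : ∃ a : ℝ, φ b = (a : EReal) := by
    lift (φ b) to ℝ using ⟨hbtop.ne, hbbot.ne'⟩ with a; exact ⟨a, rfl⟩
  obtain ⟨d, hd⟩ : ∃ d : ℝ, φ x = (d : EReal) := by
    lift (φ x) to ℝ using ⟨hxtop.ne, hxbot.ne'⟩ with d; exact ⟨d, rfl⟩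
  have hreal : ∀ n : ℕ, a ≤ d + (1/2 : ℝ)^n := by
    intro n
    have := hkey n
    rw [ha, hd, ← EReal.coe_add, EReal.coe_le_coe_iff] at this
    exact this
  have had : a ≤ d := by
    refine le_of_forall_pos_le_add ?_
    intro ε hε
    obtain ⟨n, hn⟩ := exists_pow_lt_of_lt_one hε (by norm_num : (1/2 : ℝ) < 1)
    exact le_trans (hreal n) (by linarith)
  have : φ b ≤ φ x := by rw [ha, hd, EReal.coe_le_coe_iff]; exact had
  exact le_antisymm this hxb
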